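/- For a tetrahedron, the sum of the squared areas of the three pseudofaces (projections onto planes parallel to each opposite edge pair) equals the sum of the squared areas of the four faces: P² + Q² + R² = Δ₀² + Δ₁² + Δ₂² + Δ₃². -/

import Mathlib

open RealInnerProductSpace

noncomputable def cross3 (u v : EuclideanSpace ℝ (Fin 3)) : EuclideanSpace ℝ (Fin 3) :=
  (WithLp.equiv 2 (Fin 3 → ℝ)).symm
    ![u 1 * v 2 - u 2 * v 1, u 2 * v 0 - u 0 * v 2, u 0 * v 1 - u 1 * v 0]

lemma norm_cross3_sq (u v : EuclideanSpace ℝ (Fin 3)) :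
    ‖cross3 u v‖ ^ 2 = (u 1 * v 2 - u 2 * v 1)^2 + (u 2 * v 0 - u 0 * v 2)^2
      + (u 0 * v 1 - u 1 * v 0)^2 := by
  rw [← real_inner_self_eq_norm_sq]
  rw [cross3]
  simp [EuclideanSpace.inner_eq_star_dotProduct]
  rw [EuclideanSpace.norm_eq, Real.sq_sqrt (by positivity)]
  simp [Fin.sum_univ_three]

lemma sub_apply3 (u v : EuclideanSpace ℝ (Fin 3)) (i : Fin 3) : (u - v) i = u i - v i := rfl

theorem sum_sq_pseudoface_areas (O A B C : EuclideanSpace ℝ (Fin 3))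
    (h : AffineIndependent ℝ ![O, A, B, C]) (Δ₀ Δ₁ Δ₂ Δ₃ P Q R : ℝ)
    (hΔ₀ : Δ₀ = ‖cross3 (B - A) (C - A)‖ / 2)
    (hΔ₁ : Δ₁ = ‖cross3 (B - O) (C - O)‖ / 2)
    (hΔ₂ : Δ₂ = ‖cross3 (C - O) (A - O)‖ / 2)
    (hΔ₃ : Δ₃ = ‖cross3 (A - O) (B - O)‖ / 2)
    (hP : P = ‖cross3 (A - O) (C - B)‖ / 2)
    (hQ : Q = ‖cross3 (B - O) (A - C)‖ / 2)
    (hR : R = ‖cross3 (C - O) (B - A)‖ / 2) :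
    P^2 + Q^2 + R^2 = Δ₀^2 + Δ₁^2 + Δ₂^2 + Δ₃^2 := by
  subst hΔ₀ hΔ₁ hΔ₂ hΔ₃ hP hQ hR
  simp only [div_pow, ← add_div, norm_cross3_sq, sub_apply3]
  ring
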